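/- Let b : [0,T] × ℝ^d → ℝ^d be measurable, continuous in the second variable, and of at most linear growth: ‖b(t,y)‖ ≤ C(1 + ‖y‖). If X = (X_t)_{t∈[0,T]} is a stochastic process with continuous paths, integrable at each time, satisfying X_t = x + ∫₀ᵗ b(s, E[X_s]) ds + B_t almost surely for each t (where B is a Brownian motion with E[B_t]=0), and t ↦ E[X_t] is continuous, then u(t) := E[X_t] solves the ODE u'(t) = b(t, u(t)) for a.e. t ∈ [0,T] with u(0) = x. -/

import Mathlib

open MeasureTheory intervalIntegral Metric Filter Set

/-- Lebesgue differentiation theorem for the indefinite integral: a.e. point is a point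
of differentiability with derivative the integrand. -/
lemma ae_hasDerivAt_intervalIntegral {E : Type*} [NormedAddCommGroup E] [NormedSpace ℝ E]
    [CompleteSpace E] (g : ℝ → E) (hg : Integrable g (volume : Measure ℝ)) :
    ∀ᵐ t ∂(volume : Measure ℝ), HasDerivAt (fun r => ∫ s in (0:ℝ)..r, g s) (g t) t := by
  filter_upwards [IsUnifLocDoublingMeasure.ae_tendsto_average_norm_sub
    (μ := (volume : Measure ℝ)) hg.locallyIntegrable (1 : ℝ)] with t ht
  -- the averages over shrinking balls tend to 0
  have hδ : Tendsto (fun r : ℝ => |r - t|) (nhdsWithin t {t}ᶜ) (nhdsWithin 0 (Set.Ioi 0)) := by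
    apply tendsto_nhdsWithin_of_tendsto_nhds_of_eventually_within
    · have : Tendsto (fun r : ℝ => |r - t|) (nhds t) (nhds 0) := by
        have : Continuous (fun r : ℝ => |r - t|) := (continuous_id.sub continuous_const).abs
        simpa using this.tendsto t
      exact this.mono_left nhdsWithin_le_nhds
    · filter_upwards [self_mem_nhdsWithin] with r hr
      simpa using sub_ne_zero_of_ne hr
  have hmem : ∀ᶠ r in nhdsWithin t {t}ᶜ, t ∈ closedBall t (1 * |r - t|) := by
    filter_upwards with r
    simp [abs_nonneg]
  have hA : Tendsto (fun r => ⨍ y in closedBall t |r - t|, ‖g y - g t‖) (nhdsWithin t {t}ᶜ)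
      (nhds 0) := ht (fun _ => t) (fun r => |r - t|) hδ hmem
  rw [hasDerivAt_iff_tendsto_slope]
  rw [tendsto_iff_norm_sub_tendsto_zero]
  apply squeeze_zero' (Eventually.of_forall fun r => norm_nonneg _)
    (g := fun r => 2 * ⨍ y in closedBall t |r - t|, ‖g y - g t‖)
  · filter_upwards [self_mem_nhdsWithin] with r hr
    have hrt : r ≠ t := hr
    have hrt' : r - t ≠ 0 := sub_ne_zero_of_ne hrt
    have hrabs : 0 < |r - t| := abs_pos.mpr hrt'
    set F : ℝ → E := fun r => ∫ s in (0:ℝ)..r, g s with hF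
    have hFf : F r - F t = ∫ s in t..r, g s := by
      rw [hF]
      exact integral_interval_sub_left hg.intervalIntegrable hg.intervalIntegrable
    have key : F r - F t - (r - t) • g t = ∫ s in t..r, (g s - g t) := by
      rw [intervalIntegral.integral_sub hg.intervalIntegrable intervalIntegrable_const,
        intervalIntegral.integral_const, hFf]
    have hslope : slope F t r - g t = (r - t)⁻¹ • (F r - F t - (r - t) • g t) := by
      simp only [slope, vsub_eq_sub, smul_sub, smul_smul, inv_mul_cancel₀ hrt', one_smul]
    have hsub : Set.uIoc t r ⊆ closedBall t |r - t| := by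
      intro y hy
      have hy' : y ∈ Set.uIcc t r := Set.uIoc_subset_uIcc hy
      rw [Set.mem_uIcc] at hy'
      rw [mem_closedBall, Real.dist_eq]
      rcases hy' with ⟨h1, h2⟩ | ⟨h1, h2⟩ <;>
        [skip; skip] <;>
        · rw [abs_le]
          constructor <;> cases' abs_cases (r - t) with h h <;> cases' h with ha hb <;> linarith
    have hintcb : IntegrableOn (fun s => ‖g s - g t‖) (closedBall t |r - t|) volume :=
      (hg.integrableOn.sub
        ((integrableOn_const_iff).mpr (Or.inr measure_closedBall_lt_top))).norm
    have hbound : ‖∫ s in t..r, (g s - g t)‖ ≤ ∫ s in closedBall t |r - t|, ‖g s - g t‖ := by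
      refine (intervalIntegral.norm_integral_le_integral_norm_uIoc).trans ?_
      exact setIntegral_mono_set hintcb (Eventually.of_forall fun s => norm_nonneg _)
        (HasSubset.Subset.eventuallyLE hsub)
    have hvol : (volume (closedBall t |r - t|)).toReal = 2 * |r - t| := by
      rw [Real.volume_closedBall, ENNReal.toReal_ofReal (by positivity)]
    have havg : ∫ s in closedBall t |r - t|, ‖g s - g t‖
        = (2 * |r - t|) * ⨍ y in closedBall t |r - t|, ‖g y - g t‖ := by
      rw [setAverage_eq, smul_eq_mul, measureReal_def, hvol, ← mul_assoc,
        mul_inv_cancel₀ (by positivity : (2 : ℝ) * |r - t| ≠ 0), one_mul]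
    calc ‖slope F t r - g t‖ = |r - t|⁻¹ * ‖F r - F t - (r - t) • g t‖ := by
          rw [hslope, norm_smul, norm_inv, Real.norm_eq_abs]
      _ ≤ |r - t|⁻¹ * ((2 * |r - t|) * ⨍ y in closedBall t |r - t|, ‖g y - g t‖) := by
          apply mul_le_mul_of_nonneg_left _ (by positivity)
          rw [key, ← havg]
          exact hbound
      _ = 2 * ⨍ y in closedBall t |r - t|, ‖g y - g t‖ := by
          field_simp
  · simpa using hA.const_mul 2

theorem probabilistic_caratheodory {d : ℕ} (T : ℝ) (hT : 0 < T) (C : ℝ)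
    (b : ℝ → EuclideanSpace ℝ (Fin d) → EuclideanSpace ℝ (Fin d))
    (hbm : Measurable (fun p : ℝ × EuclideanSpace ℝ (Fin d) => b p.1 p.2))
    (hbc : ∀ t, Continuous (b t))
    (hbg : ∀ t y, ‖b t y‖ ≤ C * (1 + ‖y‖))
    {Ω : Type*} [MeasureSpace Ω] [IsProbabilityMeasure (volume : Measure Ω)]
    (x : EuclideanSpace ℝ (Fin d))
    (X B : ℝ → Ω → EuclideanSpace ℝ (Fin d))
    (hXcont : ∀ ω, ContinuousOn (fun t => X t ω) (Set.Icc 0 T))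
    (hXint : ∀ t ∈ Set.Icc (0:ℝ) T, Integrable (X t))
    (hBint : ∀ t ∈ Set.Icc (0:ℝ) T, Integrable (B t))
    (hBmean : ∀ t ∈ Set.Icc (0:ℝ) T, (∫ ω, B t ω) = 0)
    (u : ℝ → EuclideanSpace ℝ (Fin d))
    (hu : ∀ t, u t = ∫ ω, X t ω)
    (hucont : ContinuousOn u (Set.Icc 0 T))
    (hSDE : ∀ t ∈ Set.Icc (0:ℝ) T, ∀ᵐ ω ∂(volume : Measure Ω),
        X t ω = x + (∫ s in (0:ℝ)..t, b s (u s)) + B t ω) :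
    u 0 = x ∧
      ∀ᵐ t ∂(volume.restrict (Set.Icc (0:ℝ) T)), HasDerivAt u (b t (u t)) t := by
  -- the expectation identity: u t = x + ∫₀ᵗ b(s, u s) ds on [0, T]
  have key : ∀ t ∈ Set.Icc (0:ℝ) T, u t = x + ∫ s in (0:ℝ)..t, b s (u s) := by
    intro t ht
    have h1 : (∫ ω, X t ω) = ∫ ω, ((x + ∫ s in (0:ℝ)..t, b s (u s)) + B t ω) := by
      apply MeasureTheory.integral_congr_ae
      filter_upwards [hSDE t ht] with ω hω
      rw [hω, add_assoc]
    rw [hu t, h1, MeasureTheory.integral_add (integrable_const _) (hBint t ht), hBmean t ht,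
      add_zero, MeasureTheory.integral_const]
    simp
  have hu0 : u 0 = x := by
    have := key 0 ⟨le_refl 0, hT.le⟩
    simpa using this
  refine ⟨hu0, ?_⟩
  -- measurability and boundedness of f s = b s (u s) on [0, T]
  set f : ℝ → EuclideanSpace ℝ (Fin d) := fun s => b s (u s) with hf
  obtain ⟨M, hM⟩ : ∃ M, ∀ s ∈ Set.Icc (0:ℝ) T, ‖u s‖ ≤ M :=
    isCompact_Icc.exists_bound_of_continuousOn hucont
  have hum : AEMeasurable u (volume.restrict (Set.Icc (0:ℝ) T)) :=
    hucont.aemeasurable measurableSet_Icc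
  have hfm : AEStronglyMeasurable f (volume.restrict (Set.Icc (0:ℝ) T)) := by
    have : AEMeasurable (fun s => (s, u s)) (volume.restrict (Set.Icc (0:ℝ) T)) :=
      aemeasurable_id.prodMk hum
    exact (hbm.comp_aemeasurable this).aestronglyMeasurable
  have hfint : IntegrableOn f (Set.Icc (0:ℝ) T) volume := by
    apply Integrable.mono' (integrable_const (C * (1 + M))) hfm
    filter_upwards [ae_restrict_mem measurableSet_Icc] with s hs
    refine (hbg s (u s)).trans ?_
    have hC : 0 ≤ C := by
      have h1 := hbg 0 0
      rw [norm_zero] at h1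
      linarith [norm_nonneg (b 0 0)]
    apply mul_le_mul_of_nonneg_left _ hC
    have := hM s hs
    linarith
  -- indicator extension
  set g : ℝ → EuclideanSpace ℝ (Fin d) := (Set.Icc (0:ℝ) T).indicator f with hgdef
  have hg : Integrable g (volume : Measure ℝ) := hfint.integrable_indicator measurableSet_Icc
  have hFg : ∀ t ∈ Set.Icc (0:ℝ) T, (∫ s in (0:ℝ)..t, f s) = ∫ s in (0:ℝ)..t, g s := by
    intro t ht
    apply intervalIntegral.integral_congr
    intro s hs
    have hs' : s ∈ Set.Icc (0:ℝ) T := by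
      rw [Set.uIcc_of_le ht.1] at hs
      exact ⟨hs.1, hs.2.trans ht.2⟩
    rw [hgdef]
    exact (Set.indicator_of_mem hs' f).symm
  -- a.e. differentiation
  have hae := ae_hasDerivAt_intervalIntegral g hg
  have haer : ∀ᵐ t ∂(volume.restrict (Set.Icc (0:ℝ) T)),
      HasDerivAt (fun r => ∫ s in (0:ℝ)..r, g s) (g t) t := ae_restrict_of_ae hae
  have hIoo : ∀ᵐ t ∂(volume.restrict (Set.Icc (0:ℝ) T)), t ∈ Set.Ioo (0:ℝ) T := by
    rw [Measure.restrict_congr_set (Ioo_ae_eq_Icc (μ := (volume : Measure ℝ)) (a := (0:ℝ))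
      (b := T)).symm]
    exact ae_restrict_mem measurableSet_Ioo
  filter_upwards [haer, hIoo] with t hdG htmem
  have htIcc : t ∈ Set.Icc (0:ℝ) T := Set.Ioo_subset_Icc_self htmem
  have hgt : g t = b t (u t) := by
    rw [hgdef]
    exact Set.indicator_of_mem htIcc f
  have hnhds : Set.Icc (0:ℝ) T ∈ nhds t := Icc_mem_nhds htmem.1 htmem.2
  have hev : u =ᶠ[nhds t] fun r => x + ∫ s in (0:ℝ)..r, g s := by
    filter_upwards [hnhds] with r hr
    rw [key r hr, hFg r hr]
  have hG : HasDerivAt (fun r => x + ∫ s in (0:ℝ)..r, g s) (b t (u t)) t := by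
    rw [← hgt]
    simpa using (hdG.const_add x)
  exact hG.congr_of_eventuallyEq hev
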